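/- If for a point x̄ with θ(x̄) < 0 and γ ∈ (0,1) it holds that for every q ∈ ℕ there exists an index h̃ ∈ {1,...,m} with f_{h̃}(x̄ + α₀δ^q v(x̄)) ≥ f_{h̃}(x̄) + γ α₀ δ^q θ(x̄), then a contradiction arises; hence θ(x̄) ≥ 0, i.e., x̄ is Pareto stationary. -/

import Mathlib

open RealInnerProductSpace

/-- Final contradiction in the IFSD convergence proof: if θ(x̄) < 0 then the Armijo
condition cannot fail (in some component) for every trial step α₀δ^q. -/
theorem no_persistent_armijo_failure
    {n m : ℕ} (hm : 0 < m)
    (f : Fin m → EuclideanSpace ℝ (Fin n) → ℝ)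
    (hf : ∀ j, ContDiff ℝ 1 (f j))
    (xbar : EuclideanSpace ℝ (Fin n))
    (g : Fin m → EuclideanSpace ℝ (Fin n))
    (hg : ∀ j, HasGradientAt (f j) (g j) xbar)
    (v : EuclideanSpace ℝ (Fin n)) (θ : ℝ)
    (hθ : θ = (Finset.univ.sup' (Finset.univ_nonempty_iff.mpr ⟨⟨0, hm⟩⟩)
        (fun j => ⟪g j, v⟫)) + (1 / 2) * ‖v‖ ^ 2)
    (hmin : ∀ d : EuclideanSpace ℝ (Fin n),
      θ ≤ (Finset.univ.sup' (Finset.univ_nonempty_iff.mpr ⟨⟨0, hm⟩⟩)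
        (fun j => ⟪g j, d⟫)) + (1 / 2) * ‖d‖ ^ 2)
    (hneg : θ < 0)
    (γ δ α₀ : ℝ) (hγ : γ ∈ Set.Ioo (0 : ℝ) 1) (hδ : δ ∈ Set.Ioo (0 : ℝ) 1)
    (hα₀ : 0 < α₀)
    (hfail : ∀ q : ℕ, ∃ j : Fin m,
      f j (xbar + (α₀ * δ ^ q) • v) ≥ f j xbar + γ * (α₀ * δ ^ q) * θ) :
    False := by

  have hθc : θ < γ * θ := by nlinarith [hγ.1, hγ.2]
  have hgv : ∀ j : Fin m, ⟪g j, v⟫ < γ * θ := by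
    intro j
    have h1 : ⟪g j, v⟫ ≤ Finset.univ.sup' (Finset.univ_nonempty_iff.mpr ⟨⟨0, hm⟩⟩)
        (fun j => ⟪g j, v⟫) := Finset.le_sup' (fun j => ⟪g j, v⟫) (Finset.mem_univ j)
    nlinarith [sq_nonneg ‖v‖]
  have hderiv : ∀ j, HasDerivAt (fun α : ℝ => f j (xbar + α • v)) ⟪g j, v⟫ 0 := by
    intro j
    have hline : HasDerivAt (fun α : ℝ => xbar + α • v) v 0 := by
      simpa using ((hasDerivAt_id (0:ℝ)).smul_const v).const_add xbar
    have h2 := (hg j).hasFDerivAt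
    rw [show xbar = xbar + (0:ℝ) • v by simp] at h2
    have h := h2.comp_hasDerivAt 0 hline
    simp [InnerProductSpace.toDual_apply_apply, Function.comp] at h
    exact h
  have hslope : ∀ j, ∀ᶠ α in nhdsWithin (0:ℝ) (Set.Ioi 0),
      (f j (xbar + α • v) - f j xbar) / α < γ * θ := by
    intro j
    have ht : Filter.Tendsto (slope (fun α : ℝ => f j (xbar + α • v)) 0)
        (nhdsWithin (0:ℝ) {(0:ℝ)}ᶜ) (nhds ⟪g j, v⟫) :=
      hasDerivAt_iff_tendsto_slope.mp (hderiv j)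
    have hev := ht.eventually (Filter.Tendsto.eventually_lt_const (hgv j) Filter.tendsto_id)
    have hmono : nhdsWithin (0:ℝ) (Set.Ioi 0) ≤ nhdsWithin (0:ℝ) {(0:ℝ)}ᶜ :=
      nhdsWithin_mono 0 (fun x hx => ne_of_gt hx)
    filter_upwards [hmono hev] with α hα
    simpa [slope, sub_zero, div_eq_inv_mul] using hα
  have hall : ∀ᶠ α in nhdsWithin (0:ℝ) (Set.Ioi 0), ∀ j,
      (f j (xbar + α • v) - f j xbar) / α < γ * θ := Filter.eventually_all.2 hslope
  have hseq : Filter.Tendsto (fun q : ℕ => α₀ * δ ^ q) Filter.atTop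
      (nhdsWithin (0:ℝ) (Set.Ioi 0)) := by
    apply tendsto_nhdsWithin_of_tendsto_nhds_of_eventually_within
    · simpa using (tendsto_pow_atTop_nhds_zero_of_lt_one hδ.1.le hδ.2).const_mul α₀
    · exact Filter.Eventually.of_forall fun q => mul_pos hα₀ (pow_pos hδ.1 q)
  obtain ⟨q, hq⟩ := (hseq.eventually hall).exists
  obtain ⟨j, hj⟩ := hfail q
  have hαpos : 0 < α₀ * δ ^ q := mul_pos hα₀ (pow_pos hδ.1 q)
  have := (div_lt_iff₀ hαpos).mp (hq j)
  nlinarith
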